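/- Let E be a Polish space with Borel σ-algebra 𝓔, and let Q_n, Q be Markov kernels on E such that for every x ∈ E, sup_{B ∈ 𝓔} |Q_n(x,B) − Q(x,B)| → 0 as n → ∞. Fix r > 0 and an integer k ≥ 1. (i) If for each i ∈ {0,…,k−1}, f_i^n, f_i : E → ℝ are Borel measurable with sup_{y∈E} |f_i^n(y)| ≤ r and f_i^n(y) → f_i(y) for every y ∈ E, then defining g^n and g by the backward recursions g^n_{k−1}(y) = e^{f^n_{k−1}(y)}, g^n_i(y) = e^{f^n_i(y)} ∫_E g^n_{i+1}(z) Q_n(y,dz), and g_{k−1}(y) = e^{f_{k−1}(y)}, g_i(y) = e^{f_i(y)} ∫_E g_{i+1}(z) Q(y,dz), one has g^n_0(x) → g_0(x) as n → ∞ for every x ∈ E. (ii) Consequently, for every α ≠ 0, every k > 1 and every x ∈ E, sup_{B ∈ 𝓔} | ln ((S^{(n)}_{1_B,α})^k 1)(x) − ln ((S_{1_B,α})^k 1)(x) | → 0 as n → ∞, where S^{(n)}_{1_B,α} and S_{1_B,α} are the weighted operators for Q_n and Q with weight function 1_B. -/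

import Mathlib

open MeasureTheory ProbabilityTheory Filter
open scoped ENNReal

/-- Total variation distance `sup_{B ∈ 𝓔} |μ(B) − ν(B)|`. -/
noncomputable def tvDist {E : Type*} [MeasurableSpace E] (μ ν : Measure E) : ℝ :=
  ⨆ B : {B : Set E // MeasurableSet B}, |(μ B.1).toReal - (ν B.1).toReal|

/-- Weighted (Feynman–Kac) operator `(S_{f,α} h)(x) = e^{α f(x)} ∫ h(y) Q(x,dy)`. -/
noncomputable def Sop {E : Type*} [MeasurableSpace E] (Q : Kernel E E)
    (f : E → ℝ) (α : ℝ) (h : E → ℝ) : E → ℝ :=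
  fun x => Real.exp (α * f x) * ∫ y, h y ∂ (Q x)

/-- The backward recursion of the paper: `chainExp Q fs k x = E_x[e^{Σ_{i<k} fs i (X_i)}]`,
i.e. `g_0` of the recursion `g_{k−1} = e^{f_{k−1}}`, `g_i(y) = e^{f_i(y)} ∫ g_{i+1} dQ(y,·)`. -/
noncomputable def chainExp {E : Type*} [MeasurableSpace E] (Q : Kernel E E) :
    (ℕ → E → ℝ) → ℕ → E → ℝ
  | _, 0 => fun _ => 1
  | fs, j + 1 => fun y =>
      Real.exp (fs 0 y) * ∫ z, chainExp Q (fun i => fs (i + 1)) j z ∂ (Q y)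


section Aux
variable {E : Type*} [MeasurableSpace E]

lemma prob_toReal_le_one (μ : Measure E) [IsProbabilityMeasure μ] (s : Set E) :
    (μ s).toReal ≤ 1 := by
  rw [← ENNReal.toReal_one]
  exact ENNReal.toReal_mono ENNReal.one_ne_top prob_le_one

lemma tvDist_nonneg (μ ν : Measure E) : 0 ≤ tvDist μ ν :=
  Real.iSup_nonneg fun _ => abs_nonneg _

lemma abs_sub_toReal_le_one (μ ν : Measure E) [IsProbabilityMeasure μ] [IsProbabilityMeasure ν]
    (s : Set E) : |(μ s).toReal - (ν s).toReal| ≤ 1 := by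
  have h1 := prob_toReal_le_one μ s
  have h2 := prob_toReal_le_one ν s
  have h3 : (0:ℝ) ≤ (μ s).toReal := ENNReal.toReal_nonneg
  have h4 : (0:ℝ) ≤ (ν s).toReal := ENNReal.toReal_nonneg
  rw [abs_sub_le_iff]
  constructor <;> linarith

lemma tvDist_bddAbove (μ ν : Measure E) [IsProbabilityMeasure μ] [IsProbabilityMeasure ν] :
    BddAbove (Set.range fun B : {B : Set E // MeasurableSet B} =>
      |(μ B.1).toReal - (ν B.1).toReal|) := by
  refine ⟨1, ?_⟩
  rintro z ⟨B, rfl⟩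
  exact abs_sub_toReal_le_one μ ν B.1

lemma abs_le_tvDist {μ ν : Measure E} [IsProbabilityMeasure μ] [IsProbabilityMeasure ν]
    {B : Set E} (hB : MeasurableSet B) :
    |(μ B).toReal - (ν B).toReal| ≤ tvDist μ ν :=
  le_ciSup (tvDist_bddAbove μ ν) (⟨B, hB⟩ : {B : Set E // MeasurableSet B})

lemma tvDist_le_one (μ ν : Measure E) [IsProbabilityMeasure μ] [IsProbabilityMeasure ν] :
    tvDist μ ν ≤ 1 := by
  haveI : Nonempty {B : Set E // MeasurableSet B} := ⟨⟨∅, MeasurableSet.empty⟩⟩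
  exact ciSup_le fun B => abs_sub_toReal_le_one μ ν B.1

lemma integrable_of_abs_le {μ : Measure E} [IsFiniteMeasure μ] {h : E → ℝ} {M : ℝ}
    (hm : AEStronglyMeasurable h μ) (hb : ∀ y, |h y| ≤ M) : Integrable h μ :=
  (integrable_const M).mono' hm (Eventually.of_forall fun y => by
    simpa [Real.norm_eq_abs] using hb y)

lemma setdiff_key {μ ν ρ : Measure E}
    {fr gr : E → ℝ} (hfrm : Measurable fr) (hgrm : Measurable gr)
    (hfri : Integrable fr ρ) (hgri : Integrable gr ρ)
    (hμs : ∀ s, MeasurableSet s → ∫ y in s, fr y ∂ρ = (μ s).toReal)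
    (hνs : ∀ s, MeasurableSet s → ∫ y in s, gr y ∂ρ = (ν s).toReal)
    {B : Set E} (hB : MeasurableSet B) :
    (μ B).toReal - (ν B).toReal ≤
      (μ {y | gr y < fr y}).toReal - (ν {y | gr y < fr y}).toReal := by
  set A := {y | gr y < fr y} with hA_def
  have hA : MeasurableSet A := measurableSet_lt hgrm hfrm
  have hint : Integrable (fun y => fr y - gr y) ρ := hfri.sub hgri
  have hform : ∀ s, MeasurableSet s →
      ∫ y in s, (fr y - gr y) ∂ρ = (μ s).toReal - (ν s).toReal := by
    intro s hs
    rw [integral_sub hfri.integrableOn hgri.integrableOn, hμs s hs, hνs s hs]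
  rw [← hform B hB, ← hform A hA]
  have hsplit : ∫ y in B, (fr y - gr y) ∂ρ =
      ∫ y in B ∩ A, (fr y - gr y) ∂ρ + ∫ y in B \ A, (fr y - gr y) ∂ρ :=
    (integral_inter_add_diff hA hint.integrableOn).symm
  have h1 : ∫ y in B \ A, (fr y - gr y) ∂ρ ≤ 0 :=
    setIntegral_nonpos (hB.diff hA) fun y hy =>
      sub_nonpos.mpr (not_lt.mp (by simpa [hA_def] using hy.2))
  have h2 : ∫ y in B ∩ A, (fr y - gr y) ∂ρ ≤ ∫ y in A, (fr y - gr y) ∂ρ :=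
    setIntegral_mono_set hint.integrableOn
      ((ae_restrict_mem hA).mono fun y hy => sub_nonneg.mpr (le_of_lt (by simpa [hA_def] using hy)))
      (Set.inter_subset_right.eventuallyLE)
  linarith

lemma tvDist_le_of_density {μ ν : Measure E} [IsProbabilityMeasure μ] [IsProbabilityMeasure ν]
    {ρ : Measure E} {fr gr : E → ℝ} (hfrm : Measurable fr) (hgrm : Measurable gr)
    (hfri : Integrable fr ρ) (hgri : Integrable gr ρ)
    (hμs : ∀ s, MeasurableSet s → ∫ y in s, fr y ∂ρ = (μ s).toReal)
    (hνs : ∀ s, MeasurableSet s → ∫ y in s, gr y ∂ρ = (ν s).toReal) :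
    tvDist μ ν ≤ ((μ {y | gr y < fr y}).toReal - (ν {y | gr y < fr y}).toReal) +
      ((ν {y | fr y < gr y}).toReal - (μ {y | fr y < gr y}).toReal) := by
  haveI : Nonempty {B : Set E // MeasurableSet B} := ⟨⟨∅, MeasurableSet.empty⟩⟩
  have hpos1 : (0:ℝ) ≤ (μ {y | gr y < fr y}).toReal - (ν {y | gr y < fr y}).toReal := by
    have := setdiff_key hfrm hgrm hfri hgri hμs hνs MeasurableSet.empty
    simpa using this
  have hpos2 : (0:ℝ) ≤ (ν {y | fr y < gr y}).toReal - (μ {y | fr y < gr y}).toReal := by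
    have := setdiff_key hgrm hfrm hgri hfri hνs hμs MeasurableSet.empty
    simpa using this
  refine ciSup_le fun B => ?_
  rw [abs_sub_le_iff]
  constructor
  · have h1 := setdiff_key hfrm hgrm hfri hgri hμs hνs B.2
    linarith
  · have h2 := setdiff_key hgrm hfrm hgri hfri hνs hμs B.2
    linarith

lemma abs_integral_sub_le (μ ν : Measure E) [IsProbabilityMeasure μ] [IsProbabilityMeasure ν]
    {h : E → ℝ} (hm : Measurable h) {M : ℝ} (hb : ∀ y, |h y| ≤ M) :
    |(∫ y, h y ∂μ) - ∫ y, h y ∂ν| ≤ 2 * M * tvDist μ ν := by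
  rcases isEmpty_or_nonempty E with hE | hE
  · exfalso
    have h1 : μ Set.univ = 1 := measure_univ
    rw [Set.univ_eq_empty_iff.mpr hE] at h1
    simp at h1
  have hM : 0 ≤ M := (abs_nonneg _).trans (hb (Classical.arbitrary E))
  set ρ : Measure E := μ + ν with hρdef
  have hμρ : μ ≪ ρ := by
    rw [hρdef]; exact Measure.absolutelyContinuous_of_le (Measure.le_add_right le_rfl)
  have hνρ : ν ≪ ρ := by
    rw [hρdef]; exact Measure.absolutelyContinuous_of_le (Measure.le_add_left le_rfl)
  set fr : E → ℝ := fun y => (μ.rnDeriv ρ y).toReal with hfr_def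
  set gr : E → ℝ := fun y => (ν.rnDeriv ρ y).toReal with hgr_def
  have hfrm : Measurable fr := (Measure.measurable_rnDeriv μ ρ).ennreal_toReal
  have hgrm : Measurable gr := (Measure.measurable_rnDeriv ν ρ).ennreal_toReal
  have hfri : Integrable fr ρ := Measure.integrable_toReal_rnDeriv
  have hgri : Integrable gr ρ := Measure.integrable_toReal_rnDeriv
  have hμs : ∀ s, MeasurableSet s → ∫ y in s, fr y ∂ρ = (μ s).toReal := fun s _ =>
    Measure.setIntegral_toReal_rnDeriv hμρ s
  have hνs : ∀ s, MeasurableSet s → ∫ y in s, gr y ∂ρ = (ν s).toReal := fun s _ =>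
    Measure.setIntegral_toReal_rnDeriv hνρ s
  have hbdd : ∀ᵐ y ∂ρ, ‖h y‖ ≤ M := Eventually.of_forall fun y => by simpa [Real.norm_eq_abs] using hb y
  have hint1 : ∫ y, h y ∂μ = ∫ y, h y * fr y ∂ρ := by
    rw [← integral_rnDeriv_smul hμρ (f := h)]
    congr 1
    funext y
    simp [hfr_def, smul_eq_mul, mul_comm]
  have hint2 : ∫ y, h y ∂ν = ∫ y, h y * gr y ∂ρ := by
    rw [← integral_rnDeriv_smul hνρ (f := h)]
    congr 1
    funext y
    simp [hgr_def, smul_eq_mul, mul_comm]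
  set d : E → ℝ := fun y => fr y - gr y with hd_def
  have hdi : Integrable d ρ := hfri.sub hgri
  have hhd_int : Integrable (fun y => h y * d y) ρ :=
    hdi.bdd_mul hm.aestronglyMeasurable hbdd
  have key : (∫ y, h y ∂μ) - ∫ y, h y ∂ν = ∫ y, h y * d y ∂ρ := by
    rw [hint1, hint2, ← integral_sub (hfri.bdd_mul hm.aestronglyMeasurable hbdd)
      (hgri.bdd_mul hm.aestronglyMeasurable hbdd)]
    congr 1
    funext y
    simp only [hd_def]
    ring
  -- bound ∫ |d| by 2 * tvDist
  set A := {y | gr y < fr y} with hA_def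
  have hA : MeasurableSet A := measurableSet_lt hgrm hfrm
  have hsplit : ∫ y, |d y| ∂ρ = (∫ y in A, |d y| ∂ρ) + ∫ y in Aᶜ, |d y| ∂ρ :=
    (integral_add_compl hA hdi.abs).symm
  have e1 : ∫ y in A, |d y| ∂ρ = (μ A).toReal - (ν A).toReal := by
    rw [setIntegral_congr_fun hA (g := fun y => fr y - gr y)
      (fun y hy => abs_of_pos (sub_pos.mpr (by simpa [hA_def] using hy)))]
    rw [integral_sub hfri.integrableOn hgri.integrableOn, hμs A hA, hνs A hA]
  have e2 : ∫ y in Aᶜ, |d y| ∂ρ = (ν Aᶜ).toReal - (μ Aᶜ).toReal := by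
    rw [setIntegral_congr_fun hA.compl (g := fun y => gr y - fr y)
      (fun y hy => by
        have : fr y ≤ gr y := not_lt.mp (by simpa [hA_def] using hy)
        simp only [hd_def]
        rw [abs_of_nonpos (by linarith)]
        ring)]
    rw [integral_sub hgri.integrableOn hfri.integrableOn, hμs Aᶜ hA.compl, hνs Aᶜ hA.compl]
  have habs : ∫ y, |d y| ∂ρ ≤ 2 * tvDist μ ν := by
    have l1 : (μ A).toReal - (ν A).toReal ≤ tvDist μ ν :=
      (le_abs_self _).trans (abs_le_tvDist hA)
    have l2 : (ν Aᶜ).toReal - (μ Aᶜ).toReal ≤ tvDist μ ν := by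
      refine (le_abs_self _).trans ?_
      rw [abs_sub_comm]
      exact abs_le_tvDist hA.compl
    linarith [hsplit, e1, e2]
  calc |(∫ y, h y ∂μ) - ∫ y, h y ∂ν| = |∫ y, h y * d y ∂ρ| := by rw [key]
    _ ≤ ∫ y, |h y| * |d y| ∂ρ := by
        simpa [Real.norm_eq_abs, abs_mul] using
          norm_integral_le_integral_norm (μ := ρ) (fun y => h y * d y)
    _ ≤ ∫ y, M * |d y| ∂ρ := by
        refine integral_mono ?_ (hdi.abs.const_mul M) fun y =>
          mul_le_mul_of_nonneg_right (hb y) (abs_nonneg _)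
        exact hhd_int.abs.congr (Eventually.of_forall fun y => abs_mul _ _)
    _ = M * ∫ y, |d y| ∂ρ := integral_const_mul M _
    _ ≤ M * (2 * tvDist μ ν) := mul_le_mul_of_nonneg_left habs hM
    _ = 2 * M * tvDist μ ν := by ring

end Aux

section Tmaj
open MeasurableSpace
variable {E : Type*} [MeasurableSpace E] [CountablyGenerated E]

/-- Measurable majorant of `y ↦ tvDist (κ y) (η y)`. -/
noncomputable def tmaj (κ η : Kernel E E) : E → ℝ := fun y =>
  (((κ y) {z | (Kernel.rnDeriv η (κ + η) y z).toReal < (Kernel.rnDeriv κ (κ + η) y z).toReal}).toReal -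
    ((η y) {z | (Kernel.rnDeriv η (κ + η) y z).toReal < (Kernel.rnDeriv κ (κ + η) y z).toReal}).toReal) +
  (((η y) {z | (Kernel.rnDeriv κ (κ + η) y z).toReal < (Kernel.rnDeriv η (κ + η) y z).toReal}).toReal -
    ((κ y) {z | (Kernel.rnDeriv κ (κ + η) y z).toReal < (Kernel.rnDeriv η (κ + η) y z).toReal}).toReal)

lemma tmaj_measurable (κ η : Kernel E E) [IsSFiniteKernel κ] [IsSFiniteKernel η] :
    Measurable (tmaj κ η) := by
  have hS1 : MeasurableSet {p : E × E |
      (Kernel.rnDeriv η (κ + η) p.1 p.2).toReal < (Kernel.rnDeriv κ (κ + η) p.1 p.2).toReal} :=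
    measurableSet_lt ((Kernel.measurable_rnDeriv η (κ + η)).ennreal_toReal)
      ((Kernel.measurable_rnDeriv κ (κ + η)).ennreal_toReal)
  have hS2 : MeasurableSet {p : E × E |
      (Kernel.rnDeriv κ (κ + η) p.1 p.2).toReal < (Kernel.rnDeriv η (κ + η) p.1 p.2).toReal} :=
    measurableSet_lt ((Kernel.measurable_rnDeriv κ (κ + η)).ennreal_toReal)
      ((Kernel.measurable_rnDeriv η (κ + η)).ennreal_toReal)
  have h1 := (Kernel.measurable_kernel_prodMk_left (κ := κ) hS1).ennreal_toReal
  have h2 := (Kernel.measurable_kernel_prodMk_left (κ := η) hS1).ennreal_toReal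
  have h3 := (Kernel.measurable_kernel_prodMk_left (κ := η) hS2).ennreal_toReal
  have h4 := (Kernel.measurable_kernel_prodMk_left (κ := κ) hS2).ennreal_toReal
  exact ((h1.sub h2).add (h3.sub h4))

lemma tvDist_le_tmaj (κ η : Kernel E E) [IsMarkovKernel κ] [IsMarkovKernel η] (y : E) :
    tvDist (κ y) (η y) ≤ tmaj κ η y := by
  set fr : E → ℝ := fun z => (Kernel.rnDeriv κ (κ + η) y z).toReal with hfr_def
  set gr : E → ℝ := fun z => (Kernel.rnDeriv η (κ + η) y z).toReal with hgr_def
  have hfrm : Measurable fr := (Kernel.measurable_rnDeriv_right κ (κ + η) y).ennreal_toReal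
  have hgrm : Measurable gr := (Kernel.measurable_rnDeriv_right η (κ + η) y).ennreal_toReal
  have hacκ : κ y ≪ (κ + η) y := by
    rw [Kernel.add_apply]
    exact Measure.absolutelyContinuous_of_le (Measure.le_add_right le_rfl)
  have hacη : η y ≪ (κ + η) y := by
    rw [Kernel.add_apply]
    exact Measure.absolutelyContinuous_of_le (Measure.le_add_left le_rfl)
  have haeκ : fr =ᵐ[(κ + η) y] fun z => ((κ y).rnDeriv ((κ + η) y) z).toReal :=
    (Kernel.rnDeriv_eq_rnDeriv_measure (κ := κ) (η := κ + η) (a := y)).mono fun z hz =>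
      congrArg ENNReal.toReal hz
  have haeη : gr =ᵐ[(κ + η) y] fun z => ((η y).rnDeriv ((κ + η) y) z).toReal :=
    (Kernel.rnDeriv_eq_rnDeriv_measure (κ := η) (η := κ + η) (a := y)).mono fun z hz =>
      congrArg ENNReal.toReal hz
  have hfri : Integrable fr ((κ + η) y) :=
    (Measure.integrable_toReal_rnDeriv (μ := κ y) (ν := (κ + η) y)).congr haeκ.symm
  have hgri : Integrable gr ((κ + η) y) :=
    (Measure.integrable_toReal_rnDeriv (μ := η y) (ν := (κ + η) y)).congr haeη.symm
  have hμs : ∀ s, MeasurableSet s → ∫ z in s, fr z ∂((κ + η) y) = ((κ y) s).toReal := by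
    intro s hs
    rw [setIntegral_congr_ae hs (haeκ.mono fun z hz _ => hz)]
    exact Measure.setIntegral_toReal_rnDeriv hacκ s
  have hνs : ∀ s, MeasurableSet s → ∫ z in s, gr z ∂((κ + η) y) = ((η y) s).toReal := by
    intro s hs
    rw [setIntegral_congr_ae hs (haeη.mono fun z hz _ => hz)]
    exact Measure.setIntegral_toReal_rnDeriv hacη s
  have := tvDist_le_of_density (μ := κ y) (ν := η y) (ρ := (κ + η) y) hfrm hgrm hfri hgri hμs hνs
  simpa [tmaj, hfr_def, hgr_def] using this

lemma tmaj_le_two_tvDist (κ η : Kernel E E) [IsMarkovKernel κ] [IsMarkovKernel η] (y : E) :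
    tmaj κ η y ≤ 2 * tvDist (κ y) (η y) := by
  have hfrm : Measurable fun z => (Kernel.rnDeriv κ (κ + η) y z).toReal :=
    (Kernel.measurable_rnDeriv_right κ (κ + η) y).ennreal_toReal
  have hgrm : Measurable fun z => (Kernel.rnDeriv η (κ + η) y z).toReal :=
    (Kernel.measurable_rnDeriv_right η (κ + η) y).ennreal_toReal
  have hS1 : MeasurableSet {z : E |
      (Kernel.rnDeriv η (κ + η) y z).toReal < (Kernel.rnDeriv κ (κ + η) y z).toReal} :=
    measurableSet_lt hgrm hfrm
  have hS2 : MeasurableSet {z : E |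
      (Kernel.rnDeriv κ (κ + η) y z).toReal < (Kernel.rnDeriv η (κ + η) y z).toReal} :=
    measurableSet_lt hfrm hgrm
  have h1 := (le_abs_self _).trans (abs_le_tvDist (μ := κ y) (ν := η y) hS1)
  have h2 : ((η y) {z | (Kernel.rnDeriv κ (κ + η) y z).toReal <
      (Kernel.rnDeriv η (κ + η) y z).toReal}).toReal -
      ((κ y) {z | (Kernel.rnDeriv κ (κ + η) y z).toReal <
      (Kernel.rnDeriv η (κ + η) y z).toReal}).toReal ≤ tvDist (κ y) (η y) := by
    refine (le_abs_self _).trans ?_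
    rw [abs_sub_comm]
    exact abs_le_tvDist hS2
  simp only [tmaj]
  linarith
end Tmaj

section ChainExp
variable {E : Type*} [MeasurableSpace E]

lemma chainExp_zero (Q : Kernel E E) (fs : ℕ → E → ℝ) : chainExp Q fs 0 = fun _ => 1 := rfl

lemma chainExp_succ (Q : Kernel E E) (fs : ℕ → E → ℝ) (j : ℕ) :
    chainExp Q fs (j + 1) = fun y =>
      Real.exp (fs 0 y) * ∫ z, chainExp Q (fun i => fs (i + 1)) j z ∂ (Q y) := rfl

lemma chainExp_measurable (Q : Kernel E E) [IsSFiniteKernel Q] :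
    ∀ (j : ℕ) (fs : ℕ → E → ℝ), (∀ i, i < j → Measurable (fs i)) →
      Measurable (chainExp Q fs j)
  | 0, fs, _ => measurable_const
  | j + 1, fs, hm => by
    rw [chainExp_succ]
    have hin : Measurable (chainExp Q (fun i => fs (i + 1)) j) :=
      chainExp_measurable Q j _ fun i hi => hm (i + 1) (Nat.succ_lt_succ hi)
    have hint : StronglyMeasurable fun y => ∫ z, chainExp Q (fun i => fs (i + 1)) j z ∂(Q y) :=
      (hin.stronglyMeasurable.comp_measurable
        (measurable_snd : Measurable fun p : E × E => p.2)).integral_kernel_prod_right'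
    exact (Real.measurable_exp.comp (hm 0 (Nat.succ_pos j))).mul hint.measurable

lemma chainExp_bounds (Q : Kernel E E) [IsMarkovKernel Q] (c : ℝ) :
    ∀ (j : ℕ) (fs : ℕ → E → ℝ), (∀ i, i < j → Measurable (fs i)) →
      (∀ i, i < j → ∀ y, |fs i y| ≤ c) →
      ∀ y, Real.exp (-(j * c)) ≤ chainExp Q fs j y ∧ chainExp Q fs j y ≤ Real.exp (j * c)
  | 0, fs, _, _ => fun y => by simp [chainExp_zero]
  | j + 1, fs, hm, hb => fun y => by
    have ih := chainExp_bounds Q c j (fun i => fs (i + 1))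
      (fun i hi => hm (i + 1) (Nat.succ_lt_succ hi))
      (fun i hi => hb (i + 1) (Nat.succ_lt_succ hi))
    set h := chainExp Q (fun i => fs (i + 1)) j with hh
    have hmeas : Measurable h :=
      chainExp_measurable Q j _ fun i hi => hm (i + 1) (Nat.succ_lt_succ hi)
    have habs : ∀ z, |h z| ≤ Real.exp (j * c) := fun z => by
      have h1 := (ih z).1; have h2 := (ih z).2
      have h3 := Real.exp_pos (-(j * c)); have h4 := Real.exp_pos ((j : ℝ) * c)
      rw [abs_le]; constructor <;> linarith
    have hint : Integrable h (Q y) := integrable_of_abs_le hmeas.aestronglyMeasurable habs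
    have hI_le : ∫ z, h z ∂(Q y) ≤ Real.exp (j * c) := by
      calc ∫ z, h z ∂(Q y) ≤ ∫ _z, Real.exp (j * c) ∂(Q y) :=
            integral_mono hint (integrable_const _) fun z => (ih z).2
        _ = Real.exp (j * c) := by simp
    have hI_ge : Real.exp (-(j * c)) ≤ ∫ z, h z ∂(Q y) := by
      calc Real.exp (-(j * c)) = ∫ _z, Real.exp (-(j * c)) ∂(Q y) := by simp
        _ ≤ ∫ z, h z ∂(Q y) := integral_mono (integrable_const _) hint fun z => (ih z).1
    have h0 := abs_le.mp (hb 0 (Nat.succ_pos j) y)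
    rw [chainExp_succ, ← hh]
    constructor
    · have e : Real.exp (-((j + 1 : ℕ) * c)) = Real.exp (-c) * Real.exp (-(j * c)) := by
        rw [← Real.exp_add]; congr 1; push_cast; ring
      rw [e]
      exact mul_le_mul (Real.exp_le_exp.mpr (by linarith [h0.1])) hI_ge
        (Real.exp_pos _).le (Real.exp_pos _).le
    · have e : Real.exp (((j + 1 : ℕ) : ℝ) * c) = Real.exp c * Real.exp ((j : ℝ) * c) := by
        rw [← Real.exp_add]; congr 1; push_cast; ring
      rw [e]
      exact mul_le_mul (Real.exp_le_exp.mpr h0.2) hI_le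
        ((Real.exp_pos _).le.trans hI_ge) (Real.exp_pos _).le

lemma chainExp_abs_le (Q : Kernel E E) [IsMarkovKernel Q] (c : ℝ) (j : ℕ) (fs : ℕ → E → ℝ)
    (hm : ∀ i, i < j → Measurable (fs i)) (hb : ∀ i, i < j → ∀ y, |fs i y| ≤ c) (y : E) :
    |chainExp Q fs j y| ≤ Real.exp (j * c) := by
  have h := chainExp_bounds Q c j fs hm hb y
  have h3 := Real.exp_pos (-((j : ℝ) * c)); have h4 := Real.exp_pos ((j : ℝ) * c)
  rw [abs_le]; constructor <;> linarith [h.1, h.2]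

lemma chainExp_tendsto (Qn : ℕ → Kernel E E) (Q : Kernel E E)
    [∀ n, IsMarkovKernel (Qn n)] [IsMarkovKernel Q]
    (htv : ∀ x, Tendsto (fun n => tvDist (Qn n x) (Q x)) atTop (nhds 0)) (r : ℝ) :
    ∀ (j : ℕ) (fsn : ℕ → ℕ → E → ℝ) (fs : ℕ → E → ℝ),
      (∀ n i, i < j → Measurable (fsn n i)) → (∀ i, i < j → Measurable (fs i)) →
      (∀ n i, i < j → ∀ y, |fsn n i y| ≤ r) →
      (∀ i, i < j → ∀ y, Tendsto (fun n => fsn n i y) atTop (nhds (fs i y))) →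
      ∀ y, Tendsto (fun n => chainExp (Qn n) (fsn n) j y) atTop (nhds (chainExp Q fs j y)) := by
  intro j
  induction j with
  | zero =>
    intro fsn fs _ _ _ _ y
    simp only [chainExp_zero]
    exact tendsto_const_nhds
  | succ j ih =>
    intro fsn fs hmn hm hbn hconv y
    have ihs := ih (fun n i => fsn n (i + 1)) (fun i => fs (i + 1))
      (fun n i hi => hmn n (i + 1) (Nat.succ_lt_succ hi))
      (fun i hi => hm (i + 1) (Nat.succ_lt_succ hi))
      (fun n i hi => hbn n (i + 1) (Nat.succ_lt_succ hi))
      (fun i hi => hconv (i + 1) (Nat.succ_lt_succ hi))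
    set hn : ℕ → E → ℝ := fun n => chainExp (Qn n) (fun i => fsn n (i + 1)) j with hn_def
    set h0 : E → ℝ := chainExp Q (fun i => fs (i + 1)) j with h0_def
    have hmeas_n : ∀ n, Measurable (hn n) := fun n =>
      chainExp_measurable (Qn n) j _ fun i hi => hmn n (i + 1) (Nat.succ_lt_succ hi)
    have hbd_n : ∀ n z, |hn n z| ≤ Real.exp (j * r) := fun n z =>
      chainExp_abs_le (Qn n) r j _ (fun i hi => hmn n (i + 1) (Nat.succ_lt_succ hi))
        (fun i hi => hbn n (i + 1) (Nat.succ_lt_succ hi)) z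
    have hDCT : Tendsto (fun n => ∫ z, hn n z ∂(Q y)) atTop (nhds (∫ z, h0 z ∂(Q y))) :=
      tendsto_integral_of_dominated_convergence (fun _ => Real.exp (j * r))
        (fun n => (hmeas_n n).aestronglyMeasurable) (integrable_const _)
        (fun n => Eventually.of_forall fun z => by
          simpa [Real.norm_eq_abs] using hbd_n n z)
        (Eventually.of_forall fun z => ihs z)
    have herr0 : Tendsto (fun n => (∫ z, hn n z ∂(Qn n y)) - ∫ z, hn n z ∂(Q y)) atTop
        (nhds 0) := by
      have hptw : ∀ n, ‖(∫ z, hn n z ∂(Qn n y)) - ∫ z, hn n z ∂(Q y)‖ ≤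
          2 * Real.exp (j * r) * tvDist (Qn n y) (Q y) := fun n => by
        simpa [Real.norm_eq_abs] using
          abs_integral_sub_le (Qn n y) (Q y) (hmeas_n n) (hbd_n n)
      have hg0 : Tendsto (fun n => 2 * Real.exp (j * r) * tvDist (Qn n y) (Q y)) atTop
          (nhds 0) := by
        simpa using (htv y).const_mul (2 * Real.exp (j * r))
      exact squeeze_zero_norm hptw hg0
    have hIconv : Tendsto (fun n => ∫ z, hn n z ∂(Qn n y)) atTop
        (nhds (∫ z, h0 z ∂(Q y))) := by
      have := herr0.add hDCT
      simpa using this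
    have hexp : Tendsto (fun n => Real.exp (fsn n 0 y)) atTop (nhds (Real.exp (fs 0 y))) :=
      (Real.continuous_exp.tendsto _).comp (hconv 0 (Nat.succ_pos j) y)
    have := hexp.mul hIconv
    simpa only [chainExp_succ, hn_def, h0_def] using this

end ChainExp

section Psi
variable {E : Type*} [MeasurableSpace E]

noncomputable def psiAux (Q : Kernel E E) (t : E → ℝ) (c C : ℝ) : ℕ → E → ℝ
  | 0 => fun _ => 0
  | j + 1 => fun y => c * (C * t y + ∫ z, psiAux Q t c C j z ∂(Q y))

noncomputable def psiBnd (c C : ℝ) : ℕ → ℝ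
  | 0 => 0
  | j + 1 => c * (C * 2 + psiBnd c C j)

lemma psiAux_zero (Q : Kernel E E) (t : E → ℝ) (c C : ℝ) : psiAux Q t c C 0 = fun _ => 0 := rfl

lemma psiAux_succ (Q : Kernel E E) (t : E → ℝ) (c C : ℝ) (j : ℕ) :
    psiAux Q t c C (j + 1) = fun y => c * (C * t y + ∫ z, psiAux Q t c C j z ∂(Q y)) := rfl

lemma psiAux_measurable (Q : Kernel E E) [IsSFiniteKernel Q] {t : E → ℝ} (ht : Measurable t)
    (c C : ℝ) : ∀ j, Measurable (psiAux Q t c C j)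
  | 0 => measurable_const
  | j + 1 => by
    have hin := psiAux_measurable Q ht c C j
    have hint : StronglyMeasurable fun y => ∫ z, psiAux Q t c C j z ∂(Q y) :=
      (hin.stronglyMeasurable.comp_measurable
        (measurable_snd : Measurable fun p : E × E => p.2)).integral_kernel_prod_right'
    exact measurable_const.mul ((measurable_const.mul ht).add hint.measurable)

lemma psiBnd_nonneg {c C : ℝ} (hc : 0 ≤ c) (hC : 0 ≤ C) : ∀ j, 0 ≤ psiBnd c C j
  | 0 => le_rfl
  | j + 1 => mul_nonneg hc (add_nonneg (mul_nonneg hC (by norm_num)) (psiBnd_nonneg hc hC j))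

lemma psiAux_bounds (Q : Kernel E E) [IsMarkovKernel Q] {t : E → ℝ} (ht : Measurable t)
    {c C : ℝ} (hc : 0 ≤ c) (hC : 0 ≤ C) (ht0 : ∀ y, 0 ≤ t y) (ht2 : ∀ y, t y ≤ 2) :
    ∀ j y, 0 ≤ psiAux Q t c C j y ∧ psiAux Q t c C j y ≤ psiBnd c C j
  | 0, y => by simp [psiAux_zero, psiBnd]
  | j + 1, y => by
    have ih := psiAux_bounds Q ht hc hC ht0 ht2 j
    have hb0 : 0 ≤ psiBnd c C j := psiBnd_nonneg hc hC j
    have hmeas := psiAux_measurable Q ht c C j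
    have habs : ∀ z, |psiAux Q t c C j z| ≤ psiBnd c C j := fun z =>
      abs_le.mpr ⟨by linarith [(ih z).1], (ih z).2⟩
    have hint : Integrable (psiAux Q t c C j) (Q y) :=
      integrable_of_abs_le hmeas.aestronglyMeasurable habs
    have hI0 : 0 ≤ ∫ z, psiAux Q t c C j z ∂(Q y) := integral_nonneg fun z => (ih z).1
    have hIle : ∫ z, psiAux Q t c C j z ∂(Q y) ≤ psiBnd c C j := by
      calc ∫ z, psiAux Q t c C j z ∂(Q y) ≤ ∫ _z, psiBnd c C j ∂(Q y) :=
            integral_mono hint (integrable_const _) fun z => (ih z).2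
        _ = psiBnd c C j := by simp
    constructor
    · rw [psiAux_succ]
      exact mul_nonneg hc (add_nonneg (mul_nonneg hC (ht0 y)) hI0)
    · rw [psiAux_succ]
      show c * (C * t y + ∫ z, psiAux Q t c C j z ∂(Q y)) ≤ psiBnd c C (j + 1)
      have : psiBnd c C (j + 1) = c * (C * 2 + psiBnd c C j) := rfl
      rw [this]
      refine mul_le_mul_of_nonneg_left (add_le_add ?_ hIle) hc
      exact mul_le_mul_of_nonneg_left (ht2 y) hC

lemma psiAux_tendsto (Q : Kernel E E) [IsMarkovKernel Q] {t : ℕ → E → ℝ}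
    (ht : ∀ n, Measurable (t n)) (ht0 : ∀ n y, 0 ≤ t n y) (ht2 : ∀ n y, t n y ≤ 2)
    {c C : ℝ} (hc : 0 ≤ c) (hC : 0 ≤ C)
    (hlim : ∀ y, Tendsto (fun n => t n y) atTop (nhds 0)) :
    ∀ j y, Tendsto (fun n => psiAux Q (t n) c C j y) atTop (nhds 0)
  | 0, y => by simp only [psiAux_zero]; exact tendsto_const_nhds
  | j + 1, y => by
    have ih := psiAux_tendsto Q ht ht0 ht2 hc hC hlim j
    have hDCT : Tendsto (fun n => ∫ z, psiAux Q (t n) c C j z ∂(Q y)) atTop (nhds 0) := by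
      rw [show (0 : ℝ) = ∫ _z, (0 : ℝ) ∂(Q y) by simp]
      refine tendsto_integral_of_dominated_convergence (fun _ => psiBnd c C j)
        (fun n => (psiAux_measurable Q (ht n) c C j).aestronglyMeasurable) (integrable_const _)
        (fun n => Eventually.of_forall fun z => ?_) (Eventually.of_forall fun z => ih z)
      have := psiAux_bounds Q (ht n) hc hC (ht0 n) (ht2 n) j z
      rw [Real.norm_eq_abs, abs_le]
      exact ⟨by linarith [this.1, psiBnd_nonneg hc hC j], this.2⟩
    have hmain : Tendsto (fun n => c * (C * t n y + ∫ z, psiAux Q (t n) c C j z ∂(Q y)))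
        atTop (nhds (c * (C * 0 + 0))) := (((hlim y).const_mul C).add hDCT).const_mul c
    simp only [psiAux_succ]
    simpa using hmain

end Psi

section Dom
variable {E : Type*} [MeasurableSpace E]

lemma chainExp_diff_le (P Q : Kernel E E) [IsMarkovKernel P] [IsMarkovKernel Q]
    {t : E → ℝ} (ht : Measurable t) (ht_ge : ∀ y, tvDist (P y) (Q y) ≤ t y)
    (ht0 : ∀ y, 0 ≤ t y) (ht2 : ∀ y, t y ≤ 2) (a : ℝ) (k : ℕ) :
    ∀ j, j ≤ k → ∀ (fs : ℕ → E → ℝ), (∀ i, Measurable (fs i)) → (∀ i y, |fs i y| ≤ |a|) →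
      ∀ y, |chainExp P fs j y - chainExp Q fs j y| ≤
        psiAux Q t (Real.exp |a|) (2 * Real.exp (k * |a|)) j y
  | 0, _, fs, _, _, y => by simp [chainExp_zero, psiAux_zero]
  | j + 1, hjk, fs, hm, hb, y => by
    set c := Real.exp |a| with hc_def
    set C := 2 * Real.exp ((k : ℝ) * |a|) with hC_def
    have hc0 : (0:ℝ) ≤ c := (Real.exp_pos _).le
    have hC0 : (0:ℝ) ≤ C := by positivity
    have ih := chainExp_diff_le P Q ht ht_ge ht0 ht2 a k j (Nat.le_of_succ_le hjk)
      (fun i => fs (i + 1)) (fun i => hm (i + 1)) (fun i y => hb (i + 1) y)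
    set hP := chainExp P (fun i => fs (i + 1)) j with hP_def
    set hQ := chainExp Q (fun i => fs (i + 1)) j with hQ_def
    have hPm : Measurable hP := chainExp_measurable P j _ fun i _ => hm (i + 1)
    have hQm : Measurable hQ := chainExp_measurable Q j _ fun i _ => hm (i + 1)
    have hjk' : (j : ℝ) * |a| ≤ (k : ℝ) * |a| :=
      mul_le_mul_of_nonneg_right (by exact_mod_cast Nat.le_of_succ_le hjk) (abs_nonneg a)
    have hPabs : ∀ z, |hP z| ≤ Real.exp ((k : ℝ) * |a|) := fun z =>
      (chainExp_abs_le P |a| j _ (fun i _ => hm (i + 1)) (fun i _ y => hb (i + 1) y) z).trans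
        (Real.exp_le_exp.mpr hjk')
    have hQabs : ∀ z, |hQ z| ≤ Real.exp ((k : ℝ) * |a|) := fun z =>
      (chainExp_abs_le Q |a| j _ (fun i _ => hm (i + 1)) (fun i _ y => hb (i + 1) y) z).trans
        (Real.exp_le_exp.mpr hjk')
    have hPint : Integrable hP (Q y) := integrable_of_abs_le hPm.aestronglyMeasurable hPabs
    have hQint : Integrable hQ (Q y) := integrable_of_abs_le hQm.aestronglyMeasurable hQabs
    have hpsi_meas := psiAux_measurable Q ht c C j
    have hpsi_bd := psiAux_bounds Q ht hc0 hC0 ht0 ht2 j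
    have hpsi_int : Integrable (psiAux Q t c C j) (Q y) :=
      integrable_of_abs_le hpsi_meas.aestronglyMeasurable fun z =>
        abs_le.mpr ⟨by linarith [(hpsi_bd z).1, psiBnd_nonneg hc0 hC0 j], (hpsi_bd z).2⟩
    have e1 : |(∫ z, hP z ∂(P y)) - ∫ z, hP z ∂(Q y)| ≤ C * t y := by
      refine (abs_integral_sub_le (P y) (Q y) hPm hPabs).trans ?_
      rw [hC_def]
      exact mul_le_mul_of_nonneg_left (ht_ge y) (by positivity)
    have e2 : |(∫ z, hP z ∂(Q y)) - ∫ z, hQ z ∂(Q y)| ≤ ∫ z, psiAux Q t c C j z ∂(Q y) := by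
      rw [← integral_sub hPint hQint]
      refine (by simpa [Real.norm_eq_abs] using
        norm_integral_le_integral_norm (μ := Q y) fun z => hP z - hQ z :
        |∫ z, (hP z - hQ z) ∂(Q y)| ≤ ∫ z, |hP z - hQ z| ∂(Q y)).trans ?_
      exact integral_mono (hPint.sub hQint).abs hpsi_int fun z => ih z
    have etri : |(∫ z, hP z ∂(P y)) - ∫ z, hQ z ∂(Q y)| ≤ C * t y +
        ∫ z, psiAux Q t c C j z ∂(Q y) :=
      (abs_sub_le _ _ _).trans (add_le_add e1 e2)
    have hexp_le : Real.exp (fs 0 y) ≤ c := Real.exp_le_exp.mpr ((le_abs_self _).trans (hb 0 y))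
    calc |chainExp P fs (j + 1) y - chainExp Q fs (j + 1) y|
        = Real.exp (fs 0 y) * |(∫ z, hP z ∂(P y)) - ∫ z, hQ z ∂(Q y)| := by
          rw [chainExp_succ, chainExp_succ]
          rw [← hP_def, ← hQ_def, ← mul_sub, abs_mul, abs_of_pos (Real.exp_pos _)]
      _ ≤ c * (C * t y + ∫ z, psiAux Q t c C j z ∂(Q y)) :=
          mul_le_mul hexp_le etri (abs_nonneg _) hc0
      _ = psiAux Q t c C (j + 1) y := by rw [psiAux_succ]

end Dom

lemma abs_log_sub_log_le {a b ε : ℝ} (hε : 0 < ε) (ha : ε ≤ a) (hb : ε ≤ b) :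
    |Real.log a - Real.log b| ≤ |a - b| / ε := by
  have key : ∀ u v : ℝ, ε ≤ u → ε ≤ v → Real.log u - Real.log v ≤ |u - v| / ε := by
    intro u v hu hv
    have hu0 : 0 < u := lt_of_lt_of_le hε hu
    have hv0 : 0 < v := lt_of_lt_of_le hε hv
    have h1 : Real.log u - Real.log v = Real.log (u / v) := (Real.log_div hu0.ne' hv0.ne').symm
    have h2 : Real.log (u / v) ≤ u / v - 1 := Real.log_le_sub_one_of_pos (div_pos hu0 hv0)
    have h3 : u / v - 1 = (u - v) / v := by field_simp
    have h4 : (u - v) / v ≤ |u - v| / v := (div_le_div_iff_of_pos_right hv0).mpr (le_abs_self _)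
    have h5 : |u - v| / v ≤ |u - v| / ε := div_le_div_of_nonneg_left (abs_nonneg _) hε hv
    linarith
  rw [abs_sub_le_iff]
  refine ⟨key a b ha hb, ?_⟩
  have := key b a hb ha
  rwa [abs_sub_comm] at this

lemma Sop_iterate {E : Type*} [MeasurableSpace E] (Q : Kernel E E) (f : E → ℝ) (α : ℝ) :
    ∀ m, (Sop Q f α)^[m] (fun _ => 1) = chainExp Q (fun _ y => α * f y) m
  | 0 => rfl
  | m + 1 => by
    rw [Function.iterate_succ_apply', Sop_iterate Q f α m]
    rfl

/-- Proposition 3: (i) convergence of the backward recursions under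
total variation convergence of the kernels and pointwise convergence of uniformly
bounded weights; (ii) consequently, uniform (in the Borel set `B`) convergence of the
logarithms of `((S_{1_B,α})^k 1)(x)`. -/
theorem stmt10 {E : Type*} [TopologicalSpace E] [PolishSpace E]
    [MeasurableSpace E] [BorelSpace E]
    (Qn : ℕ → Kernel E E) (Q : Kernel E E)
    [∀ n, IsMarkovKernel (Qn n)] [IsMarkovKernel Q]
    (htv : ∀ x, Tendsto (fun n => tvDist (Qn n x) (Q x)) atTop (nhds 0))
    (r : ℝ) (hr : 0 < r) (k : ℕ) (hk : 1 ≤ k) :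
    (∀ (fsn : ℕ → ℕ → E → ℝ) (fs : ℕ → E → ℝ),
      (∀ n i, i < k → Measurable (fsn n i)) →
      (∀ i, i < k → Measurable (fs i)) →
      (∀ n i, i < k → ∀ y, |fsn n i y| ≤ r) →
      (∀ i, i < k → ∀ y, Tendsto (fun n => fsn n i y) atTop (nhds (fs i y))) →
      ∀ x : E, Tendsto (fun n => chainExp (Qn n) (fsn n) k x) atTop
        (nhds (chainExp Q fs k x))) ∧
    (∀ α : ℝ, α ≠ 0 → 1 < k → ∀ x : E,
      Tendsto (fun n => ⨆ B : {B : Set E // MeasurableSet B},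
        |Real.log ((Sop (Qn n) (B.1.indicator 1) α)^[k] (fun _ => 1) x) -
          Real.log ((Sop Q (B.1.indicator 1) α)^[k] (fun _ => 1) x)|)
        atTop (nhds 0)) := by
  constructor
  · intro fsn fs hmn hm hbn hconv x
    exact chainExp_tendsto Qn Q htv r k fsn fs hmn hm hbn hconv x
  · intro α hα hk1 x
    haveI : Nonempty {B : Set E // MeasurableSet B} := ⟨⟨∅, MeasurableSet.empty⟩⟩
    set c := Real.exp |α| with hc_def
    set M := Real.exp ((k : ℝ) * |α|) with hM_def
    set C := 2 * M with hC_def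
    have hc0 : (0:ℝ) ≤ c := (Real.exp_pos _).le
    have hC0 : (0:ℝ) ≤ C := by positivity
    set t : ℕ → E → ℝ := fun n => tmaj (Qn n) Q with ht_def
    have htm : ∀ n, Measurable (t n) := fun n => tmaj_measurable (Qn n) Q
    have ht_ge : ∀ n y, tvDist (Qn n y) (Q y) ≤ t n y := fun n y => tvDist_le_tmaj (Qn n) Q y
    have ht_le : ∀ n y, t n y ≤ 2 * tvDist (Qn n y) (Q y) := fun n y =>
      tmaj_le_two_tvDist (Qn n) Q y
    have ht0 : ∀ n y, 0 ≤ t n y := fun n y => (tvDist_nonneg _ _).trans (ht_ge n y)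
    have ht2 : ∀ n y, t n y ≤ 2 := fun n y =>
      (ht_le n y).trans (by linarith [tvDist_le_one (Qn n y) (Q y)])
    have htlim : ∀ y, Tendsto (fun n => t n y) atTop (nhds 0) := fun y => by
      refine squeeze_zero (fun n => ht0 n y) (fun n => ht_le n y) ?_
      simpa using (htv y).const_mul 2
    -- per-B weight families
    have hbfs : ∀ (B : Set E) (y : E), |α * B.indicator 1 y| ≤ |α| := by
      intro B y
      rw [abs_mul]
      refine mul_le_of_le_one_right (abs_nonneg α) ?_
      by_cases hy : y ∈ B <;> simp [Set.indicator_of_mem, Set.indicator_of_notMem, hy]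
    have hmfs : ∀ (B : Set E), MeasurableSet B → Measurable fun y => α * B.indicator 1 y :=
      fun B hB => measurable_const.mul (measurable_const.indicator hB)
    -- key bound
    have key : ∀ n (B : {B : Set E // MeasurableSet B}),
        |Real.log ((Sop (Qn n) (B.1.indicator 1) α)^[k] (fun _ => 1) x) -
          Real.log ((Sop Q (B.1.indicator 1) α)^[k] (fun _ => 1) x)| ≤
          M * psiAux Q (t n) c C k x := by
      intro n B
      rw [Sop_iterate, Sop_iterate]
      set fsB : ℕ → E → ℝ := fun _ y => α * B.1.indicator 1 y with hfsB_def
      have hmB : ∀ i, Measurable (fsB i) := fun _ => hmfs B.1 B.2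
      have hbB : ∀ i y, |fsB i y| ≤ |α| := fun _ y => hbfs B.1 y
      have hlow1 : Real.exp (-((k : ℝ) * |α|)) ≤ chainExp (Qn n) fsB k x :=
        (chainExp_bounds (Qn n) |α| k fsB (fun i _ => hmB i) (fun i _ y => hbB i y) x).1
      have hlow2 : Real.exp (-((k : ℝ) * |α|)) ≤ chainExp Q fsB k x :=
        (chainExp_bounds Q |α| k fsB (fun i _ => hmB i) (fun i _ y => hbB i y) x).1
      have hdiff := chainExp_diff_le (Qn n) Q (htm n) (ht_ge n) (ht0 n) (ht2 n) α k k le_rfl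
        fsB hmB hbB x
      have hlog := abs_log_sub_log_le (Real.exp_pos (-((k : ℝ) * |α|))) hlow1 hlow2
      calc |Real.log (chainExp (Qn n) fsB k x) - Real.log (chainExp Q fsB k x)|
          ≤ |chainExp (Qn n) fsB k x - chainExp Q fsB k x| / Real.exp (-((k : ℝ) * |α|)) := hlog
        _ = M * |chainExp (Qn n) fsB k x - chainExp Q fsB k x| := by
            rw [Real.exp_neg, div_inv_eq_mul, mul_comm, hM_def]
        _ ≤ M * psiAux Q (t n) c C k x := by
            refine mul_le_mul_of_nonneg_left ?_ (by positivity)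
            exact hdiff
    have hub : ∀ n, (⨆ B : {B : Set E // MeasurableSet B},
        |Real.log ((Sop (Qn n) (B.1.indicator 1) α)^[k] (fun _ => 1) x) -
          Real.log ((Sop Q (B.1.indicator 1) α)^[k] (fun _ => 1) x)|) ≤
          M * psiAux Q (t n) c C k x := fun n => ciSup_le (key n)
    have hlb : ∀ n, (0:ℝ) ≤ ⨆ B : {B : Set E // MeasurableSet B},
        |Real.log ((Sop (Qn n) (B.1.indicator 1) α)^[k] (fun _ => 1) x) -
          Real.log ((Sop Q (B.1.indicator 1) α)^[k] (fun _ => 1) x)| := fun n =>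
      Real.iSup_nonneg fun B => abs_nonneg _
    have hpsi0 : Tendsto (fun n => psiAux Q (t n) c C k x) atTop (nhds 0) :=
      psiAux_tendsto Q htm ht0 ht2 hc0 hC0 htlim k x
    have hub0 : Tendsto (fun n => M * psiAux Q (t n) c C k x) atTop (nhds 0) := by
      simpa using hpsi0.const_mul M
    exact tendsto_of_tendsto_of_tendsto_of_le_of_le tendsto_const_nhds hub0 hlb hub
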